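/- Let V₁ ⊆ V₂ be finite sets and (V₁,c₁), (V₂,c₂) connected weighted graphs whose effective resistances R₁ and R₂ agree on V₁ × V₁. Then c₁(x,y) ≥ c₂(x,y) and (c₁)_x ≤ (c₂)_x for all x, y ∈ V₁; consequently c₁(x,y)/(c₁)_x ≥ c₂(x,y)/(c₂)_x. -/

import Mathlib

noncomputable def deg {W : Type*} [Fintype W] (c : W → W → ℝ) (x : W) : ℝ := ∑ y, c x y

def IsWeight {W : Type*} (c : W → W → ℝ) : Prop :=
  (∀ x y, 0 ≤ c x y) ∧ (∀ x y, c x y = c y x) ∧ (∀ x, c x x = 0)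

def Conn {W : Type*} (c : W → W → ℝ) : Prop :=
  ∀ x y, Relation.ReflTransGen (fun a b => 0 < c a b) x y

noncomputable def lap {W : Type*} [Fintype W] (c : W → W → ℝ) (φ : W → ℝ) (x : W) : ℝ :=
  φ x - ∑ y, (c x y / deg c x) * φ y

def IsDirichlet {W : Type*} [Fintype W] [DecidableEq W] (c : W → W → ℝ) (x y : W)
    (φ : W → ℝ) : Prop :=
  (∀ z, lap c φ z =
      (if z = x then 1 / deg c x else 0) - (if z = y then 1 / deg c y else 0)) ∧
  φ y = 0

def IsEffRes {W : Type*} [Fintype W] [DecidableEq W] (c : W → W → ℝ) (R : W → W → ℝ) : Prop :=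
  (∀ x, R x x = 0) ∧ ∀ x y, x ≠ y → ∃ φ, IsDirichlet c x y φ ∧ φ x = R x y

section Basic
variable {W : Type*} [Fintype W]

/-- The (unnormalized) graph Laplacian as a linear map. -/
noncomputable def lapL (c : W → W → ℝ) : (W → ℝ) →ₗ[ℝ] (W → ℝ) where
  toFun f := fun x => ∑ y, c x y * (f x - f y)
  map_add' f g := by
    funext x
    simp only [Pi.add_apply]
    rw [← Finset.sum_add_distrib]
    exact Finset.sum_congr rfl fun y _ => by ring
  map_smul' r f := by
    funext x
    simp only [RingHom.id_apply, Pi.smul_apply, smul_eq_mul, Finset.mul_sum]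
    exact Finset.sum_congr rfl fun y _ => by ring

lemma lapL_apply (c : W → W → ℝ) (f : W → ℝ) (x : W) :
    lapL c f x = ∑ y, c x y * (f x - f y) := rfl

/-- Dirichlet energy bilinear expression. -/
noncomputable def En (c : W → W → ℝ) (f g : W → ℝ) : ℝ :=
  ∑ x, ∑ y, c x y * (f x - f y) * (g x - g y)

lemma En_comm (c : W → W → ℝ) (f g : W → ℝ) : En c f g = En c g f := by
  unfold En
  exact Finset.sum_congr rfl fun x _ => Finset.sum_congr rfl fun y _ => by ring

lemma green (c : W → W → ℝ) (hs : ∀ x y, c x y = c y x) (f g : W → ℝ) :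
    2 * (∑ x, g x * lapL c f x) = En c f g := by
  have h1 : (∑ x, g x * lapL c f x) = ∑ x, ∑ y, c x y * (f x - f y) * g x := by
    refine Finset.sum_congr rfl fun x _ => ?_
    rw [lapL_apply, Finset.mul_sum]
    exact Finset.sum_congr rfl fun y _ => by ring
  have h2 : (∑ x, ∑ y, c x y * (f x - f y) * g y)
      = -∑ x, ∑ y, c x y * (f x - f y) * g x := by
    rw [Finset.sum_comm, ← Finset.sum_neg_distrib]
    refine Finset.sum_congr rfl fun a _ => ?_
    rw [← Finset.sum_neg_distrib]
    refine Finset.sum_congr rfl fun b _ => ?_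
    rw [hs b a]; ring
  have h3 : En c f g = (∑ x, ∑ y, c x y * (f x - f y) * g x)
      - (∑ x, ∑ y, c x y * (f x - f y) * g y) := by
    unfold En
    rw [← Finset.sum_sub_distrib]
    refine Finset.sum_congr rfl fun x _ => ?_
    rw [← Finset.sum_sub_distrib]
    exact Finset.sum_congr rfl fun y _ => by ring
  rw [h1, h3, h2]; ring

lemma En_self_nonneg (c : W → W → ℝ) (hnn : ∀ x y, 0 ≤ c x y) (f : W → ℝ) :
    0 ≤ En c f f := by
  refine Finset.sum_nonneg fun x _ => Finset.sum_nonneg fun y _ => ?_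
  rw [mul_assoc]
  exact mul_nonneg (hnn x y) (mul_self_nonneg _)

lemma const_of_en_zero (c : W → W → ℝ) (hnn : ∀ x y, 0 ≤ c x y) (hconn : Conn c)
    (f : W → ℝ) (h : En c f f = 0) : ∀ x y, f x = f y := by
  have hterm : ∀ x y, 0 < c x y → f x = f y := by
    intro x y hc
    have h1 := (Finset.sum_eq_zero_iff_of_nonneg
      (fun x _ => Finset.sum_nonneg fun y _ => by
        rw [mul_assoc]; exact mul_nonneg (hnn x y) (mul_self_nonneg _))).mp h x
      (Finset.mem_univ x)
    have h2 := (Finset.sum_eq_zero_iff_of_nonneg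
      (fun y _ => by rw [mul_assoc]; exact mul_nonneg (hnn x y) (mul_self_nonneg _))).mp h1 y
      (Finset.mem_univ y)
    rw [mul_assoc] at h2
    rcases mul_eq_zero.mp h2 with h3 | h3
    · exact absurd h3 (ne_of_gt hc)
    · have := mul_self_eq_zero.mp h3
      linarith
  intro x y
  induction hconn x y with
  | refl => rfl
  | tail _ hbc ih => exact ih.trans (hterm _ _ hbc)

lemma deg_pos (c : W → W → ℝ) (hnn : ∀ x y, 0 ≤ c x y) (hconn : Conn c)
    (hcard : 1 < Fintype.card W) (x : W) : 0 < deg c x := by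
  obtain ⟨y, hy⟩ := Fintype.exists_ne_of_one_lt_card hcard x
  rcases (hconn x y).cases_head with h | ⟨b, hb, _⟩
  · exact absurd h.symm hy
  · calc (0:ℝ) < c x b := hb
    _ ≤ ∑ z, c x z := Finset.single_le_sum (fun z _ => hnn x z) (Finset.mem_univ b)

lemma lapL_of_dirichlet [DecidableEq W] (c : W → W → ℝ) (x y : W) (hxy : x ≠ y)
    (φ : W → ℝ) (hd : IsDirichlet c x y φ) (hdeg : ∀ z, 0 < deg c z) :
    ∀ z, lapL c φ z = (if z = x then 1 else 0) - (if z = y then 1 else 0) := by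
  intro z
  have hL : lapL c φ z = deg c z * lap c φ z := by
    rw [lapL_apply, lap]
    rw [mul_sub, Finset.mul_sum]
    have : ∀ w, deg c z * (c z w / deg c z * φ w) = c z w * φ w := by
      intro w
      rw [div_mul_eq_mul_div, mul_div_assoc']
      exact mul_div_cancel_left₀ _ (hdeg z).ne'
    rw [Finset.sum_congr rfl fun w _ => this w]
    have : ∑ w, c z w * (φ z - φ w) = (∑ w, c z w) * φ z - ∑ w, c z w * φ w := by
      rw [Finset.sum_mul, ← Finset.sum_sub_distrib]
      exact Finset.sum_congr rfl fun w _ => by ring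
    rw [this]
    rfl
  rw [hL, hd.1 z]
  by_cases hzx : z = x
  · subst hzx
    rw [if_pos rfl, if_pos rfl, if_neg hxy, if_neg hxy]
    rw [sub_zero, sub_zero, mul_one_div]
    exact div_self (hdeg z).ne'
  · rw [if_neg hzx, if_neg hzx]
    by_cases hzy : z = y
    · subst hzy
      rw [if_pos rfl, if_pos rfl]
      rw [zero_sub, zero_sub, mul_neg, mul_one_div, div_self (hdeg z).ne']
    · rw [if_neg hzy, if_neg hzy]; ring

lemma lapL_const (c : W → W → ℝ) (r : ℝ) : lapL c (fun _ => r) = 0 := by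
  funext x
  rw [lapL_apply]
  simp

end Basic

section Abstract
variable {α : Type*} [Fintype α] [DecidableEq α] [Nonempty α]

lemma sum_mul_delta (f : α → ℝ) (a b : α) :
    ∑ x, f x * ((if x = a then (1:ℝ) else 0) - (if x = b then 1 else 0)) = f a - f b := by
  simp [mul_sub, Finset.sum_sub_distrib, mul_ite, mul_one, mul_zero]

/-- The "resistance polarization" formula for an abstract symmetric operator with
constant kernel and a family of normalized Dirichlet solutions. -/
lemma resist_formula (A : (α → ℝ) →ₗ[ℝ] (α → ℝ))
    (hsym : ∀ f g, ∑ x, g x * A f x = ∑ x, f x * A g x)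
    (hker : ∀ f, A f = 0 → ∀ x y, f x = f y)
    (ψ : α → α → α → ℝ)
    (hA : ∀ a b, A (ψ a b) = fun z => (if z = a then (1:ℝ) else 0) - (if z = b then 1 else 0))
    (hb : ∀ a b, ψ a b b = 0) :
    ∀ z t x y, ψ z t x - ψ z t y =
      (ψ x t x + ψ y z y - ψ x z x - ψ y t y) / 2 := by
  have hrec : ∀ a b z t, ψ a b z - ψ a b t = ψ z t a - ψ z t b := by
    intro a b z t
    have h := hsym (ψ z t) (ψ a b)
    rw [hA, hA] at h
    rw [sum_mul_delta, sum_mul_delta] at h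
    exact h
  have key : ∀ a b w z, ψ a b z = ψ a w z - ψ b w z - ψ a w b + ψ b w b := by
    intro a b w z
    set G : α → ℝ := ψ a b - ψ a w + ψ b w with hGdef
    have hG : A G = 0 := by
      rw [hGdef, map_add, map_sub, hA, hA, hA]
      funext u
      simp only [Pi.add_apply, Pi.sub_apply, Pi.zero_apply]
      ring
    have h := hker G hG z b
    have hGz : G z = ψ a b z - ψ a w z + ψ b w z := by
      simp [hGdef, Pi.add_apply, Pi.sub_apply]
    have hGb : G b = - ψ a w b + ψ b w b := by
      simp [hGdef, Pi.add_apply, Pi.sub_apply, hb a b]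
    rw [hGz, hGb] at h
    linarith
  have qsym : ∀ a b w, ψ a w b = ψ b w a := by
    intro a b w
    have h := hrec a w b w
    rw [hb a w, hb b w] at h
    linarith
  intro z t x y
  have w : α := Classical.arbitrary α
  have k1 := key z t w x
  have k2 := key z t w y
  have k3 := key x t w x
  have k4 := key y z w y
  have k5 := key x z w x
  have k6 := key y t w y
  have q1 := qsym x t w
  have q2 := qsym y z w
  have q3 := qsym x z w
  have q4 := qsym y t w
  linarith

lemma abstract_eq (A₁ A₂ : (α → ℝ) →ₗ[ℝ] (α → ℝ))
    (hsym₁ : ∀ f g, ∑ x, g x * A₁ f x = ∑ x, f x * A₁ g x)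
    (hsym₂ : ∀ f g, ∑ x, g x * A₂ f x = ∑ x, f x * A₂ g x)
    (hker₁ : ∀ f, A₁ f = 0 → ∀ x y, f x = f y)
    (hker₂ : ∀ f, A₂ f = 0 → ∀ x y, f x = f y)
    (hone₁ : A₁ (fun _ => 1) = 0) (hone₂ : A₂ (fun _ => 1) = 0)
    (ψ₁ ψ₂ : α → α → α → ℝ)
    (hA₁ : ∀ a b, A₁ (ψ₁ a b) = fun z => (if z = a then (1:ℝ) else 0) - (if z = b then 1 else 0))
    (hA₂ : ∀ a b, A₂ (ψ₂ a b) = fun z => (if z = a then (1:ℝ) else 0) - (if z = b then 1 else 0))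
    (hb₁ : ∀ a b, ψ₁ a b b = 0) (hb₂ : ∀ a b, ψ₂ a b b = 0)
    (hR : ∀ a b, ψ₁ a b a = ψ₂ a b a) : A₁ = A₂ := by
  have hψ : ∀ z t, ψ₁ z t = ψ₂ z t := by
    intro z t
    funext x
    have h1 := resist_formula A₁ hsym₁ hker₁ ψ₁ hA₁ hb₁ z t x t
    have h2 := resist_formula A₂ hsym₂ hker₂ ψ₂ hA₂ hb₂ z t x t
    rw [hb₁ z t] at h1
    rw [hb₂ z t] at h2
    have e1 := hR x t
    have e2 := hR t z
    have e3 := hR x z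
    have e4 := hR t t
    linarith
  -- spanning family
  set y₀ := Classical.arbitrary α with hy₀
  set v : α → (α → ℝ) := fun a => if a = y₀ then (fun _ => 1) else ψ₁ a y₀ with hv
  have hAv : ∀ a, A₁ (v a) = A₂ (v a) := by
    intro a
    by_cases ha : a = y₀
    · have hva : v a = fun _ => (1:ℝ) := by simp [hv, ha]
      rw [hva, hone₁, hone₂]
    · have hva : v a = ψ₁ a y₀ := by simp [hv, ha]
      rw [hva, hA₁ a y₀, hψ a y₀, hA₂ a y₀]
  have hli : LinearIndependent ℝ v := by
    rw [Fintype.linearIndependent_iff]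
    intro g hg
    have hg' : ∀ x, ∑ a, g a * v a x = 0 := by
      intro x
      have h := congrFun hg x
      rw [Finset.sum_apply] at h
      simpa [Pi.smul_apply, smul_eq_mul] using h
    have hy : g y₀ = 0 := by
      have h := hg' y₀
      rw [Finset.sum_eq_single y₀ (fun a _ ha => by
        have hva : v a y₀ = 0 := by simp [hv, if_neg ha, hb₁ a y₀]
        rw [hva, mul_zero]) (by simp)] at h
      have hvy : v y₀ y₀ = 1 := by simp [hv]
      rw [hvy, mul_one] at h
      exact h
    intro i
    by_cases hi : i = y₀
    · rw [hi]; exact hy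
    · have hsum : ∑ a, g a • A₁ (v a) = 0 := by
        have h1 : ∑ a, g a • A₁ (v a) = A₁ (∑ a, g a • v a) := by
          rw [map_sum]
          exact Finset.sum_congr rfl fun a _ => (map_smul A₁ (g a) (v a)).symm
        rw [h1, hg, map_zero]
      have h := congrFun hsum i
      rw [Finset.sum_apply] at h
      have hterm : ∀ a, (g a • A₁ (v a)) i = if a = i then g i else 0 := by
        intro a
        rw [Pi.smul_apply, smul_eq_mul]
        by_cases ha : a = y₀
        · have hva : v a = fun _ => (1:ℝ) := by simp [hv, ha]
          rw [hva, hone₁]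
          rw [if_neg (by rw [ha]; exact fun hh => hi hh.symm)]
          simp
        · have hva : v a = ψ₁ a y₀ := by simp [hv, ha]
          rw [hva, hA₁ a y₀]
          simp only []
          rw [if_neg hi, sub_zero]
          by_cases hai : a = i
          · subst hai
            rw [if_pos rfl, if_pos rfl, mul_one]
          · rw [if_neg (fun hh => hai hh.symm), if_neg hai, mul_zero]
      rw [Finset.sum_congr rfl fun a _ => hterm a] at h
      rw [Finset.sum_ite_eq' Finset.univ i (fun _ => g i)] at h
      rw [if_pos (Finset.mem_univ i)] at h
      exact h
  have hspan : Submodule.span ℝ (Set.range v) = ⊤ :=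
    hli.span_eq_top_of_card_eq_finrank (Module.finrank_fintype_fun_eq_card ℝ).symm
  refine LinearMap.ext_on hspan ?_
  rintro f ⟨a, rfl⟩
  exact hAv a
end Abstract

section MoreBasic
variable {W : Type*} [Fintype W]

lemma En_expand (c : W → W → ℝ) (f g : W → ℝ) :
    En c (f + g) (f + g) = En c f f + 2 * En c f g + En c g g := by
  unfold En
  rw [Finset.mul_sum, ← Finset.sum_add_distrib, ← Finset.sum_add_distrib]
  refine Finset.sum_congr rfl fun x _ => ?_
  rw [Finset.mul_sum, ← Finset.sum_add_distrib, ← Finset.sum_add_distrib]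
  refine Finset.sum_congr rfl fun y _ => ?_
  simp only [Pi.add_apply]
  ring

lemma lapL_sym (c : W → W → ℝ) (hs : ∀ x y, c x y = c y x) (f g : W → ℝ) :
    ∑ x, g x * lapL c f x = ∑ x, f x * lapL c g x := by
  have h1 := green c hs f g
  have h2 := green c hs g f
  rw [En_comm] at h2
  linarith

lemma lapL_ker (c : W → W → ℝ) (hnn : ∀ x y, 0 ≤ c x y) (hs : ∀ x y, c x y = c y x)
    (hconn : Conn c) (f : W → ℝ) (h : lapL c f = 0) : ∀ a b, f a = f b := by
  have h0 : ∑ x, f x * lapL c f x = 0 := by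
    refine Finset.sum_eq_zero fun x _ => ?_
    rw [h]; simp
  have hE : En c f f = 0 := by
    have := green c hs f f
    rw [h0] at this
    linarith
  exact const_of_en_zero c hnn hconn f hE

end MoreBasic

section Ext
variable {V : Type*} [Fintype V] [DecidableEq V]

/-- Extension by zero outside a finset, as a linear map. -/
noncomputable def emb (s : Finset V) : (↥s → ℝ) →ₗ[ℝ] (V → ℝ) where
  toFun f := fun z => if h : z ∈ s then f ⟨z, h⟩ else 0
  map_add' f g := by funext z; by_cases h : z ∈ s <;> simp [h]
  map_smul' r f := by funext z; by_cases h : z ∈ s <;> simp [h]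

/-- Restriction to a finset, as a linear map. -/
def restr (s : Finset V) : (V → ℝ) →ₗ[ℝ] (↥s → ℝ) where
  toFun F := fun x => F ↑x
  map_add' F G := rfl
  map_smul' r F := rfl

lemma emb_mem (s : Finset V) (f : ↥s → ℝ) (x : ↥s) : emb s f ↑x = f x := by
  show (if h : (↑x : V) ∈ s then f ⟨↑x, h⟩ else 0) = f x
  rw [dif_pos x.2]

lemma emb_not_mem (s : Finset V) (f : ↥s → ℝ) (z : V) (hz : z ∉ s) : emb s f z = 0 :=
  dif_neg hz

lemma restr_apply (s : Finset V) (F : V → ℝ) (x : ↥s) : restr s F x = F ↑x := rfl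

variable (c : V → V → ℝ) (V₁ : Finset V)

lemma sum_split (F : V → ℝ) :
    ∑ z, F z = (∑ x : ↥V₁, F ↑x) + ∑ z : ↥(V₁ᶜ), F ↑z := by
  rw [Finset.sum_coe_sort, Finset.sum_coe_sort, Finset.sum_add_sum_compl]

/-- The Laplacian on the complement block. -/
noncomputable def TB : (↥(V₁ᶜ) → ℝ) →ₗ[ℝ] (↥(V₁ᶜ) → ℝ) :=
  restr V₁ᶜ ∘ₗ lapL c ∘ₗ emb V₁ᶜ

lemma TB_apply (u : ↥(V₁ᶜ) → ℝ) (z : ↥(V₁ᶜ)) :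
    TB c V₁ u z = lapL c (emb V₁ᶜ u) ↑z := rfl

lemma not_mem_compl (x : ↥V₁) : (↑x : V) ∉ V₁ᶜ := fun h => (Finset.mem_compl.mp h) x.2

lemma mem_of_compl (z : ↥(V₁ᶜ)) : (↑z : V) ∉ V₁ := Finset.mem_compl.mp z.2

lemma TB_bij (hnn : ∀ x y, 0 ≤ c x y) (hs : ∀ x y, c x y = c y x) (hconn : Conn c)
    (hne : V₁.Nonempty) : Function.Bijective (TB c V₁) := by
  have hinj : Function.Injective (TB c V₁) := by
    rw [← LinearMap.ker_eq_bot, LinearMap.ker_eq_bot']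
    intro u hu
    set U : V → ℝ := emb V₁ᶜ u with hU
    have h0 : ∑ z, U z * lapL c U z = 0 := by
      rw [sum_split V₁]
      have hA : ∀ x : ↥V₁, U ↑x * lapL c U ↑x = 0 := by
        intro x
        rw [hU, emb_not_mem V₁ᶜ u ↑x (not_mem_compl V₁ x), zero_mul]
      have hB : ∀ z : ↥(V₁ᶜ), U ↑z * lapL c U ↑z = 0 := by
        intro z
        have : lapL c U ↑z = 0 := by
          rw [hU, ← TB_apply, hu]; rfl
        rw [this, mul_zero]
      rw [Finset.sum_eq_zero fun x _ => hA x, Finset.sum_eq_zero fun z _ => hB z, add_zero]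
    have hE : En c U U = 0 := by
      have := green c hs U U
      rw [h0] at this
      linarith
    have hc := const_of_en_zero c hnn hconn U hE
    obtain ⟨x₀, hx₀⟩ := hne
    have hU0 : ∀ z, U z = 0 := by
      intro z
      rw [hc z x₀, hU, emb_not_mem V₁ᶜ u x₀ (by simp [hx₀])]
    funext z
    have := hU0 ↑z
    rw [hU, emb_mem] at this
    exact this
  exact ⟨hinj, LinearMap.injective_iff_surjective.mp hinj⟩

/-- The harmonic extension operator. -/
noncomputable def extMap (hbij : Function.Bijective (TB c V₁)) :
    (↥V₁ → ℝ) →ₗ[ℝ] (V → ℝ) :=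
  emb V₁ + emb V₁ᶜ ∘ₗ (LinearEquiv.ofBijective (TB c V₁) hbij).symm.toLinearMap ∘ₗ
    (-(restr V₁ᶜ ∘ₗ lapL c ∘ₗ emb V₁))

lemma extMap_boundary (hbij : Function.Bijective (TB c V₁)) (f : ↥V₁ → ℝ) (x : ↥V₁) :
    extMap c V₁ hbij f ↑x = f x := by
  show emb V₁ f ↑x + emb V₁ᶜ _ ↑x = f x
  rw [emb_mem, emb_not_mem _ _ _ (not_mem_compl V₁ x), add_zero]

lemma extMap_harm (hbij : Function.Bijective (TB c V₁)) (f : ↥V₁ → ℝ) (z : ↥(V₁ᶜ)) :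
    lapL c (extMap c V₁ hbij f) ↑z = 0 := by
  set w : ↥(V₁ᶜ) → ℝ := (-(restr V₁ᶜ ∘ₗ lapL c ∘ₗ emb V₁)) f with hw
  set u : ↥(V₁ᶜ) → ℝ := (LinearEquiv.ofBijective (TB c V₁) hbij).symm w with hu
  have hext : extMap c V₁ hbij f = emb V₁ f + emb V₁ᶜ u := rfl
  rw [hext, map_add, Pi.add_apply]
  have h1 : lapL c (emb V₁ᶜ u) ↑z = TB c V₁ u z := rfl
  have h2 : TB c V₁ u = w := by
    have h3 : (LinearEquiv.ofBijective (TB c V₁) hbij) u = w := by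
      rw [hu]
      exact (LinearEquiv.ofBijective (TB c V₁) hbij).apply_symm_apply w
    exact (LinearEquiv.ofBijective_apply _ _).symm.trans h3
  have h3 : w z = -(lapL c (emb V₁ f) ↑z) := rfl
  rw [h1, h2, h3]
  ring

lemma extMap_unique (hnn : ∀ x y, 0 ≤ c x y) (hs : ∀ x y, c x y = c y x) (hconn : Conn c)
    (hne : V₁.Nonempty) (hbij : Function.Bijective (TB c V₁)) (f : ↥V₁ → ℝ) (F : V → ℝ)
    (hbd : ∀ x : ↥V₁, F ↑x = f x) (hh : ∀ z : ↥(V₁ᶜ), lapL c F ↑z = 0) :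
    F = extMap c V₁ hbij f := by
  set G : V → ℝ := F - extMap c V₁ hbij f with hG
  have hGb : ∀ x : ↥V₁, G ↑x = 0 := by
    intro x
    rw [hG, Pi.sub_apply, hbd x, extMap_boundary, sub_self]
  have hGh : ∀ z : ↥(V₁ᶜ), lapL c G ↑z = 0 := by
    intro z
    rw [hG, map_sub, Pi.sub_apply, hh z, extMap_harm, sub_self]
  have h0 : ∑ z, G z * lapL c G z = 0 := by
    rw [sum_split V₁]
    rw [Finset.sum_eq_zero fun x _ => by rw [hGb x, zero_mul],
        Finset.sum_eq_zero fun z _ => by rw [hGh z, mul_zero], add_zero]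
  have hE : En c G G = 0 := by
    have := green c hs G G
    rw [h0] at this
    linarith
  have hconst := const_of_en_zero c hnn hconn G hE
  obtain ⟨x₀, hx₀⟩ := hne
  have : ∀ z, G z = 0 := fun z => by
    rw [hconst z x₀]
    exact hGb ⟨x₀, hx₀⟩
  funext z
  have hz := this z
  rw [hG, Pi.sub_apply, sub_eq_zero] at hz
  exact hz

lemma extMap_nonneg (hnn : ∀ x y, 0 ≤ c x y) (hs : ∀ x y, c x y = c y x) (hconn : Conn c)
    (hne : V₁.Nonempty) (hbij : Function.Bijective (TB c V₁)) (f : ↥V₁ → ℝ)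
    (hf : ∀ x, 0 ≤ f x) : ∀ z, 0 ≤ extMap c V₁ hbij f z := by
  set h : V → ℝ := extMap c V₁ hbij f with hh
  set g : V → ℝ := (fun z => max (h z) 0) - h with hg
  have hgb : ∀ x : ↥V₁, g ↑x = 0 := by
    intro x
    rw [hg, Pi.sub_apply]
    have : h ↑x = f x := extMap_boundary c V₁ hbij f x
    rw [this, max_eq_left (hf x), sub_self]
  have hcross : ∑ z, g z * lapL c h z = 0 := by
    rw [sum_split V₁]
    rw [Finset.sum_eq_zero fun x _ => by rw [hgb x, zero_mul],
        Finset.sum_eq_zero fun z _ => by rw [hh, extMap_harm, mul_zero], add_zero]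
  have hEhg : En c h g = 0 := by
    have := green c hs h g
    rw [hcross] at this
    linarith
  have hle : En c (h + g) (h + g) ≤ En c h h := by
    have hHG : h + g = fun z => max (h z) 0 := by
      funext z
      rw [Pi.add_apply, hg, Pi.sub_apply]
      ring
    rw [hHG]
    unfold En
    refine Finset.sum_le_sum fun x _ => Finset.sum_le_sum fun y _ => ?_
    rw [mul_assoc, mul_assoc]
    refine mul_le_mul_of_nonneg_left ?_ (hnn x y)
    have habs : |max (h x) 0 - max (h y) 0| ≤ |h x - h y| := abs_max_sub_max_le_abs _ _ _
    calc (max (h x) 0 - max (h y) 0) * (max (h x) 0 - max (h y) 0)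
        = |max (h x) 0 - max (h y) 0| * |max (h x) 0 - max (h y) 0| := by
          rw [abs_mul_abs_self]
      _ ≤ |h x - h y| * |h x - h y| := mul_le_mul_of_nonneg' habs habs (abs_nonneg _) (abs_nonneg _)
      _ = (h x - h y) * (h x - h y) := by rw [abs_mul_abs_self]
  have hEg : En c g g = 0 := by
    have hexp := En_expand c h g
    have hnng := En_self_nonneg c hnn g
    rw [hEhg] at hexp
    have : En c (h + g) (h + g) = En c h h + En c g g := by linarith
    have h2 : En c g g ≤ 0 := by linarith
    linarith
  have hconst := const_of_en_zero c hnn hconn g hEg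
  obtain ⟨x₀, hx₀⟩ := hne
  have hg0 : ∀ z, g z = 0 := fun z => by
    rw [hconst z x₀]
    exact hgb ⟨x₀, hx₀⟩
  intro z
  have hz := hg0 z
  rw [hg, Pi.sub_apply, sub_eq_zero] at hz
  show (0:ℝ) ≤ h z
  rw [← hz]
  exact le_max_right _ _

/-- The trace (Schur complement) operator on V₁. -/
noncomputable def A2 (hbij : Function.Bijective (TB c V₁)) :
    (↥V₁ → ℝ) →ₗ[ℝ] (↥V₁ → ℝ) :=
  restr V₁ ∘ₗ lapL c ∘ₗ extMap c V₁ hbij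

lemma A2_apply (hbij : Function.Bijective (TB c V₁)) (f : ↥V₁ → ℝ) (x : ↥V₁) :
    A2 c V₁ hbij f x = lapL c (extMap c V₁ hbij f) ↑x := rfl

lemma A2_sum (hbij : Function.Bijective (TB c V₁)) (f g : ↥V₁ → ℝ) :
    ∑ x : ↥V₁, g x * A2 c V₁ hbij f x
      = ∑ z, extMap c V₁ hbij g z * lapL c (extMap c V₁ hbij f) z := by
  rw [sum_split V₁ (fun z => extMap c V₁ hbij g z * lapL c (extMap c V₁ hbij f) z)]
  rw [Finset.sum_eq_zero (fun (z : ↥(V₁ᶜ)) _ => by rw [extMap_harm, mul_zero]), add_zero]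
  refine Finset.sum_congr rfl fun x _ => ?_
  rw [extMap_boundary, A2_apply]

lemma A2_sym (hs : ∀ x y, c x y = c y x) (hbij : Function.Bijective (TB c V₁))
    (f g : ↥V₁ → ℝ) :
    ∑ x : ↥V₁, g x * A2 c V₁ hbij f x = ∑ x : ↥V₁, f x * A2 c V₁ hbij g x := by
  rw [A2_sum, A2_sum]
  exact lapL_sym c hs _ _

lemma A2_ker (hnn : ∀ x y, 0 ≤ c x y) (hs : ∀ x y, c x y = c y x) (hconn : Conn c)
    (hbij : Function.Bijective (TB c V₁)) (f : ↥V₁ → ℝ) (h : A2 c V₁ hbij f = 0) :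
    ∀ a b : ↥V₁, f a = f b := by
  have h0 : ∑ z, extMap c V₁ hbij f z * lapL c (extMap c V₁ hbij f) z = 0 := by
    rw [← A2_sum]
    refine Finset.sum_eq_zero fun x _ => ?_
    rw [h]
    simp
  have hE : En c (extMap c V₁ hbij f) (extMap c V₁ hbij f) = 0 := by
    have := green c hs (extMap c V₁ hbij f) (extMap c V₁ hbij f)
    rw [h0] at this
    linarith
  have hconst := const_of_en_zero c hnn hconn _ hE
  intro a b
  rw [← extMap_boundary c V₁ hbij f a, ← extMap_boundary c V₁ hbij f b]
  exact hconst _ _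

lemma A2_one (hnn : ∀ x y, 0 ≤ c x y) (hs : ∀ x y, c x y = c y x) (hconn : Conn c)
    (hne : V₁.Nonempty) (hbij : Function.Bijective (TB c V₁)) :
    A2 c V₁ hbij (fun _ => 1) = 0 := by
  have hext : (fun _ => (1:ℝ)) = extMap c V₁ hbij (fun _ => 1) := by
    refine extMap_unique c V₁ hnn hs hconn hne hbij _ _ (fun x => rfl) fun z => ?_
    rw [show (fun _ : V => (1:ℝ)) = fun _ => (1:ℝ) from rfl, lapL_const]
    rfl
  funext x
  rw [A2_apply, ← hext, lapL_const]
  rfl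

end Ext

theorem stmt11 {V₂ : Type*} [Fintype V₂] [DecidableEq V₂] (V₁ : Finset V₂)
    (c₁ : ↥V₁ → ↥V₁ → ℝ) (c₂ : V₂ → V₂ → ℝ)
    (hw₁ : IsWeight c₁) (hw₂ : IsWeight c₂)
    (hconn₁ : Conn c₁) (hconn₂ : Conn c₂)
    (R₁ : ↥V₁ → ↥V₁ → ℝ) (R₂ : V₂ → V₂ → ℝ)
    (h₁ : IsEffRes c₁ R₁) (h₂ : IsEffRes c₂ R₂)
    (hagree : ∀ x y : ↥V₁, R₁ x y = R₂ x.1 y.1) :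
    ∀ x y : ↥V₁,
      c₂ x.1 y.1 ≤ c₁ x y ∧
      deg c₁ x ≤ deg c₂ x.1 ∧
      c₂ x.1 y.1 / deg c₂ x.1 ≤ c₁ x y / deg c₁ x := by
  obtain ⟨hnn₁, hs₁, hd₁⟩ := hw₁
  obtain ⟨hnn₂, hs₂, hd₂⟩ := hw₂
  intro x y
  by_cases hcard : 1 < Fintype.card ↥V₁
  · -- main case
    have hne : V₁.Nonempty := ⟨↑x, x.2⟩
    haveI hne' : Nonempty ↥V₁ := ⟨x⟩
    have hcard₂ : 1 < Fintype.card V₂ :=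
      lt_of_lt_of_le hcard (Fintype.card_le_of_injective _ Subtype.val_injective)
    have hdeg₁ : ∀ z, 0 < deg c₁ z := deg_pos c₁ hnn₁ hconn₁ hcard
    have hdeg₂ : ∀ z, 0 < deg c₂ z := deg_pos c₂ hnn₂ hconn₂ hcard₂
    have hbij := TB_bij c₂ V₁ hnn₂ hs₂ hconn₂ hne
    -- Dirichlet solutions for c₁
    have hΨ : ∀ a b : ↥V₁, ∃ φ : ↥V₁ → ℝ,
        (lapL c₁ φ = fun z => (if z = a then (1:ℝ) else 0) - (if z = b then 1 else 0)) ∧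
        φ b = 0 ∧ φ a = R₁ a b := by
      intro a b
      by_cases hab : a = b
      · subst hab
        refine ⟨0, ?_, rfl, ?_⟩
        · rw [map_zero]; funext z; simp
        · rw [h₁.1 a]; simp
      · obtain ⟨φ, hφd, hφa⟩ := h₁.2 a b hab
        refine ⟨φ, ?_, hφd.2, hφa⟩
        funext z
        exact lapL_of_dirichlet c₁ a b hab φ hφd hdeg₁ z
    choose Ψ hΨ1 hΨ2 hΨ3 using hΨ
    -- Dirichlet solutions for c₂
    have hΦ : ∀ a b : ↥V₁, ∃ φ : V₂ → ℝ,
        (∀ z, lapL c₂ φ z = (if z = (↑a:V₂) then (1:ℝ) else 0) - (if z = ↑b then 1 else 0)) ∧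
        φ ↑b = 0 ∧ φ ↑a = R₂ ↑a ↑b := by
      intro a b
      by_cases hab : a = b
      · subst hab
        refine ⟨0, fun z => ?_, rfl, ?_⟩
        · rw [map_zero]; simp
        · rw [h₂.1]; simp
      · have hab' : (↑a : V₂) ≠ ↑b := fun h => hab (Subtype.coe_injective h)
        obtain ⟨φ, hφd, hφa⟩ := h₂.2 ↑a ↑b hab'
        exact ⟨φ, lapL_of_dirichlet c₂ ↑a ↑b hab' φ hφd hdeg₂, hφd.2, hφa⟩
    choose Φ hΦ1 hΦ2 hΦ3 using hΦ
    have hΦharm : ∀ (a b : ↥V₁) (z : ↥(V₁ᶜ : Finset V₂)), lapL c₂ (Φ a b) ↑z = 0 := by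
      intro a b z
      rw [hΦ1 a b ↑z, if_neg (fun h => mem_of_compl V₁ z (by rw [h]; exact a.2)),
        if_neg (fun h => mem_of_compl V₁ z (by rw [h]; exact b.2)), sub_zero]
    have hΦext : ∀ a b : ↥V₁, Φ a b = extMap c₂ V₁ hbij (fun w => Φ a b ↑w) :=
      fun a b => extMap_unique c₂ V₁ hnn₂ hs₂ hconn₂ hne hbij _ _ (fun _ => rfl) (hΦharm a b)
    -- the two operators are equal
    have hEq : lapL c₁ = A2 c₂ V₁ hbij := by
      refine abstract_eq (lapL c₁) (A2 c₂ V₁ hbij)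
        (lapL_sym c₁ hs₁) (A2_sym c₂ V₁ hs₂ hbij)
        (lapL_ker c₁ hnn₁ hs₁ hconn₁) (A2_ker c₂ V₁ hnn₂ hs₂ hconn₂ hbij)
        (lapL_const c₁ 1) (A2_one c₂ V₁ hnn₂ hs₂ hconn₂ hne hbij)
        Ψ (fun a b => fun w => Φ a b ↑w)
        hΨ1 ?_ hΨ2 (fun a b => hΦ2 a b) ?_
      · intro a b
        funext z
        rw [A2_apply, ← hΦext a b, hΦ1 a b ↑z]
        simp only [Subtype.coe_inj]
      · intro a b
        rw [hΨ3 a b, hagree a b, ← hΦ3 a b]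
    -- extraction of the inequalities
    set ey : ↥V₁ → ℝ := fun z => if z = y then 1 else 0 with hey
    set hyf : V₂ → ℝ := extMap c₂ V₁ hbij ey with hhyf
    have hynn : ∀ z, 0 ≤ hyf z := by
      rw [hhyf]
      exact extMap_nonneg c₂ V₁ hnn₂ hs₂ hconn₂ hne hbij ey
        (fun z => by rw [hey]; by_cases h : z = y <;> simp [h])
    have hc : c₂ ↑x ↑y ≤ c₁ x y := by
      by_cases hxy : x = y
      · subst hxy
        rw [hd₂ ↑x, hd₁ x]
      · have h1 : lapL c₁ ey x = -c₁ x y := by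
          rw [lapL_apply]
          have hterm : ∀ z, c₁ x z * (ey x - ey z) = -(if z = y then c₁ x z else 0) := by
            intro z
            simp only [hey, if_neg hxy]
            by_cases hz : z = y <;> simp [hz]
          rw [Finset.sum_congr rfl fun z _ => hterm z, Finset.sum_neg_distrib,
            Finset.sum_ite_eq' Finset.univ y (fun z => c₁ x z), if_pos (Finset.mem_univ y)]
        have h3 : c₁ x y = ∑ z, c₂ (↑x) z * hyf z := by
          have e1 : lapL c₁ ey x = A2 c₂ V₁ hbij ey x := by rw [hEq]
          have hx0 : hyf ↑x = 0 := by
            rw [hhyf, extMap_boundary, hey]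
            simp [hxy]
          have e2 : A2 c₂ V₁ hbij ey x = -∑ z, c₂ ↑x z * hyf z := by
            rw [A2_apply, ← hhyf, lapL_apply]
            have hterm : ∀ z, c₂ ↑x z * (hyf ↑x - hyf z) = -(c₂ ↑x z * hyf z) := by
              intro z; rw [hx0]; ring
            rw [Finset.sum_congr rfl fun z _ => hterm z, Finset.sum_neg_distrib]
          rw [h1, e2] at e1
          linarith
        rw [h3]
        have hyy : hyf ↑y = 1 := by
          rw [hhyf, extMap_boundary, hey]
          simp
        calc c₂ ↑x ↑y = c₂ ↑x ↑y * hyf ↑y := by rw [hyy, mul_one]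
          _ ≤ ∑ z, c₂ ↑x z * hyf z :=
            Finset.single_le_sum (f := fun z => c₂ (↑x) z * hyf z)
              (fun z _ => mul_nonneg (hnn₂ _ _) (hynn z)) (Finset.mem_univ (↑y : V₂))
    have hdle : deg c₁ x ≤ deg c₂ ↑x := by
      set ex : ↥V₁ → ℝ := fun z => if z = x then 1 else 0 with hex
      set hxf : V₂ → ℝ := extMap c₂ V₁ hbij ex with hhxf
      have hxnn : ∀ z, 0 ≤ hxf z := by
        rw [hhxf]
        exact extMap_nonneg c₂ V₁ hnn₂ hs₂ hconn₂ hne hbij ex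
          (fun z => by rw [hex]; by_cases h : z = x <;> simp [h])
      have hxx1 : hxf ↑x = 1 := by
        rw [hhxf, extMap_boundary, hex]
        simp
      have h1 : lapL c₁ ex x = deg c₁ x := by
        rw [lapL_apply]
        have hterm : ∀ z, c₁ x z * (ex x - ex z) = c₁ x z - (if z = x then c₁ x z else 0) := by
          intro z
          simp only [hex, if_pos rfl]
          by_cases hz : z = x <;> simp [hz]
        rw [Finset.sum_congr rfl fun z _ => hterm z, Finset.sum_sub_distrib,
          Finset.sum_ite_eq' Finset.univ x (fun z => c₁ x z), if_pos (Finset.mem_univ x),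
          hd₁ x, sub_zero]
        rfl
      have h2 : A2 c₂ V₁ hbij ex x = ∑ z, c₂ ↑x z * (1 - hxf z) := by
        rw [A2_apply, ← hhxf, lapL_apply]
        refine Finset.sum_congr rfl fun z _ => by rw [hxx1]
      have h3 : deg c₁ x = ∑ z, c₂ ↑x z * (1 - hxf z) := by
        rw [← h1, hEq, h2]
      rw [h3]
      calc ∑ z, c₂ ↑x z * (1 - hxf z) ≤ ∑ z, c₂ ↑x z * 1 :=
            Finset.sum_le_sum fun z _ =>
              mul_le_mul_of_nonneg_left (by linarith [hxnn z]) (hnn₂ _ _)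
        _ = deg c₂ ↑x := by simp [deg]
    refine ⟨hc, hdle, ?_⟩
    exact div_le_div₀ (le_trans (hnn₂ _ _) hc) hc (hdeg₁ x) hdle
  · -- trivial case : V₁ a singleton
    have hsub : Subsingleton ↥V₁ := Fintype.card_le_one_iff_subsingleton.mp (not_lt.mp hcard)
    have hxy : y = x := Subsingleton.elim y x
    rw [hxy]
    refine ⟨?_, ?_, ?_⟩
    · rw [hd₂ ↑x, hd₁ x]
    · have hz : deg c₁ x = 0 :=
        Finset.sum_eq_zero fun z _ => by rw [Subsingleton.elim z x, hd₁ x]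
      rw [hz]
      exact Finset.sum_nonneg fun z _ => hnn₂ _ _
    · rw [hd₂ ↑x, hd₁ x, zero_div, zero_div]
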